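/- arXiv:0812.0255 — 4 statements merged into one kernel-verified Lean document; each statement's English description precedes it below -/
import Mathlib

section
/- For any complex number β and natural number n, the integral ∫_{-∞}^{∞} e^{-x²}(x-β)^n dx equals √π · (i/2)^n · H_n(iβ), where H_n is the n-th (physicists') Hermite polynomial. -/
open MeasureTheory Polynomial Filter Complex

/-- The physicists' Hermite polynomials, defined by the recurrence
`H_{n+1}(x) = 2 x H_n(x) - H_n'(x)`, `H_0 = 1`. -/
noncomputable def physHermite : ℕ → Polynomial ℤ
  | 0 => 1
  | n + 1 => 2 * (Polynomial.X * physHermite n) - Polynomial.derivative (physHermite n)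


lemma physHermite_succ (n : ℕ) :
    physHermite (n+1) = 2 * (X * physHermite n) - derivative (physHermite n) := rfl

lemma physHermite_deriv (n : ℕ) :
    derivative (physHermite (n+1)) = (2*(n : Polynomial ℤ)+2) * physHermite n := by
  induction n with
  | zero => simp [physHermite, map_ofNat]
  | succ n ih =>
    have h2 : physHermite (n+2) = 2*(X*physHermite (n+1)) - (2*(n : Polynomial ℤ)+2) * physHermite n := by
      rw [physHermite_succ (n+1), ih]
    rw [h2, derivative_sub, derivative_mul, derivative_mul, derivative_mul, derivative_X,
      ih, derivative_add, derivative_mul, derivative_natCast, derivative_ofNat,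
      physHermite_succ n]
    push_cast
    ring

lemma aeval_physHermite_succ_succ (y : ℂ) (n : ℕ) :
    aeval y (physHermite (n+2)) =
      2*y*aeval y (physHermite (n+1)) - (2*(n:ℂ)+2)*aeval y (physHermite n) := by
  rw [physHermite_succ (n+1), physHermite_deriv]
  simp only [map_sub, map_mul, map_add, map_ofNat, aeval_X, map_natCast]
  ring

lemma norm_gauss_pow_le (β : ℂ) (n : ℕ) (x : ℝ) :
    ‖Complex.exp (-(x:ℂ)^2) * ((x:ℂ)-β)^n‖ ≤ (|x| + ‖β‖)^n * Real.exp (-x^2) := by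
  rw [norm_mul, norm_pow, Complex.norm_exp]
  have h1 : (-(x:ℂ)^2).re = -x^2 := by simp [← Complex.ofReal_pow]
  rw [h1, mul_comm]
  apply mul_le_mul_of_nonneg_right _ (Real.exp_pos _).le
  apply pow_le_pow_left₀ (norm_nonneg _)
  calc ‖(x:ℂ) - β‖ ≤ ‖(x:ℂ)‖ + ‖β‖ := norm_sub_le _ _
    _ = |x| + ‖β‖ := by rw [Complex.norm_real, Real.norm_eq_abs]

lemma integrable_abs_pow_gauss (k : ℕ) :
    Integrable (fun x : ℝ => |x|^k * Real.exp (-x^2)) := by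
  have h := (integrable_rpow_mul_exp_neg_mul_sq (b := 1) one_pos
    (s := (k:ℝ)) (lt_of_lt_of_le neg_one_lt_zero (Nat.cast_nonneg k))).abs
  apply h.congr (Filter.Eventually.of_forall fun x => ?_)
  dsimp only
  rw [abs_mul, Real.rpow_natCast, _root_.abs_pow, Real.abs_exp]
  norm_num

lemma integrable_gauss_pow (β : ℂ) (n : ℕ) :
    Integrable (fun x : ℝ => Complex.exp (-(x:ℂ)^2) * ((x:ℂ)-β)^n) := by
  have hmeas : AEStronglyMeasurable (fun x : ℝ => Complex.exp (-(x:ℂ)^2) * ((x:ℂ)-β)^n) volume := by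
    apply Continuous.aestronglyMeasurable
    fun_prop
  have hbound : Integrable (fun x : ℝ => (|x| + ‖β‖)^n * Real.exp (-x^2)) := by
    have heq : (fun x : ℝ => (|x| + ‖β‖)^n * Real.exp (-x^2)) =
        fun x => ∑ k ∈ Finset.range (n+1),
          (|x|^k * Real.exp (-x^2)) * (‖β‖^(n-k) * (n.choose k)) := by
      funext x
      rw [add_pow, Finset.sum_mul]
      apply Finset.sum_congr rfl
      intros; ring
    rw [heq]
    exact integrable_finset_sum _ fun k _ => (integrable_abs_pow_gauss k).mul_const _
  exact hbound.mono' hmeas (Filter.Eventually.of_forall fun x => norm_gauss_pow_le β n x)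

lemma tendsto_gauss_pow_atTop (β : ℂ) (n : ℕ) :
    Tendsto (fun x : ℝ => Complex.exp (-(x:ℂ)^2) * ((x:ℂ)-β)^n) atTop (nhds 0) := by
  have tk : ∀ k : ℕ, Tendsto (fun x : ℝ => x^k * Real.exp (-x^2)) atTop (nhds 0) := by
    intro k
    have h := (rpow_mul_exp_neg_mul_sq_isLittleO_exp_neg (b := 1) one_pos (k:ℝ)).trans_tendsto ?_
    · apply h.congr fun x => ?_
      rw [Real.rpow_natCast]
      norm_num
    · have h2 : Tendsto (fun x : ℝ => -(1/2) * x) atTop atBot := by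
        apply Filter.tendsto_id.const_mul_atTop_of_neg
        norm_num
      exact Real.tendsto_exp_atBot.comp h2
  have key : Tendsto (fun x : ℝ => (|x| + ‖β‖)^n * Real.exp (-x^2)) atTop (nhds 0) := by
    have key' : Tendsto (fun x : ℝ => (x + ‖β‖)^n * Real.exp (-x^2)) atTop (nhds 0) := by
      have heq : (fun x : ℝ => (x + ‖β‖)^n * Real.exp (-x^2)) =
          fun x => ∑ k ∈ Finset.range (n+1),
            (x^k * Real.exp (-x^2)) * (‖β‖^(n-k) * (n.choose k)) := by
        funext x
        rw [add_pow, Finset.sum_mul]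
        apply Finset.sum_congr rfl
        intros; ring
      rw [heq]
      have := tendsto_finset_sum (Finset.range (n+1))
        (fun k _ => ((tk k).mul_const (‖β‖^(n-k) * (n.choose k))))
      simpa using this
    apply key'.congr'
    filter_upwards [eventually_ge_atTop (0:ℝ)] with x hx
    rw [_root_.abs_of_nonneg hx]
  exact squeeze_zero_norm (fun x => norm_gauss_pow_le β n x) key

lemma tendsto_gauss_pow_atBot (β : ℂ) (n : ℕ) :
    Tendsto (fun x : ℝ => Complex.exp (-(x:ℂ)^2) * ((x:ℂ)-β)^n) atBot (nhds 0) := by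
  have h := (tendsto_gauss_pow_atTop (-β) n).const_mul ((-1:ℂ)^n)
  rw [mul_zero] at h
  have h2 := h.comp tendsto_neg_atBot_atTop
  apply h2.congr fun x => ?_
  simp only [Function.comp, Complex.ofReal_neg]
  have hb : ((x:ℂ) - β) = (-1) * ((-(x:ℂ)) - -β) := by ring
  rw [hb, mul_pow, neg_sq]
  ring

lemma integral_deriv_zero {F F' : ℝ → ℂ} (hderiv : ∀ x, HasDerivAt F (F' x) x)
    (hint : Integrable F') (htop : Tendsto F atTop (nhds 0))
    (hbot : Tendsto F atBot (nhds 0)) : ∫ x : ℝ, F' x = 0 := by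
  rw [← intervalIntegral.integral_Iic_add_Ioi (b := 0) hint.integrableOn hint.integrableOn,
    integral_Ioi_of_hasDerivAt_of_tendsto' (fun x _ => hderiv x) hint.integrableOn htop,
    integral_Iic_of_hasDerivAt_of_tendsto' (fun x _ => hderiv x) hint.integrableOn hbot]
  ring

lemma hasDerivAt_gauss_pow (β : ℂ) (n : ℕ) (x : ℝ) :
    HasDerivAt (fun y : ℝ => Complex.exp (-(y:ℂ)^2) * ((y:ℂ)-β)^(n+1))
      (Complex.exp (-(x:ℂ)^2) *
        ((-2*(x:ℂ)) * ((x:ℂ)-β)^(n+1) + ((n:ℂ)+1) * ((x:ℂ)-β)^n)) x := by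
  have h1 : HasDerivAt (fun z : ℂ => Complex.exp (-z^2))
      (Complex.exp (-(x:ℂ)^2) * -(2*(x:ℂ)^1)) (x:ℂ) := by
    exact ((hasDerivAt_pow 2 (x:ℂ)).neg).cexp
  have h2 : HasDerivAt (fun z : ℂ => (z-β)^(n+1))
      ((n+1 : ℕ) * ((x:ℂ)-β)^n * 1) (x:ℂ) := by
    simpa using ((hasDerivAt_id ((x:ℂ))).sub_const β).fun_pow (n+1)
  have h3 := (h1.fun_mul h2).comp_ofReal
  convert h3 using 1
  push_cast
  ring

lemma gauss_ibp (β : ℂ) (n : ℕ) :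
    (∫ x : ℝ, Complex.exp (-(x:ℂ)^2) * ((x:ℂ)-β)^(n+2))
      = -β * (∫ x : ℝ, Complex.exp (-(x:ℂ)^2) * ((x:ℂ)-β)^(n+1))
        + ((n:ℂ)+1)/2 * ∫ x : ℝ, Complex.exp (-(x:ℂ)^2) * ((x:ℂ)-β)^n := by
  set f : ℕ → ℝ → ℂ := fun m x => Complex.exp (-(x:ℂ)^2) * ((x:ℂ)-β)^m with hf
  have hderiv : ∀ x : ℝ, HasDerivAt (fun y : ℝ => Complex.exp (-(y:ℂ)^2) * ((y:ℂ)-β)^(n+1))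
      ((-2) * f (n+2) x + ((-2)*β) * f (n+1) x + ((n:ℂ)+1) * f n x) x := by
    intro x
    convert hasDerivAt_gauss_pow β n x using 1
    simp only [hf]
    ring
  have hint : Integrable (fun x : ℝ =>
      (-2) * f (n+2) x + ((-2)*β) * f (n+1) x + ((n:ℂ)+1) * f n x) :=
    (((integrable_gauss_pow β (n+2)).const_mul _).add
      ((integrable_gauss_pow β (n+1)).const_mul _)).add
      ((integrable_gauss_pow β n).const_mul _)
  have h0 := integral_deriv_zero hderiv hint
    (tendsto_gauss_pow_atTop β (n+1)) (tendsto_gauss_pow_atBot β (n+1))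
  have hA : Integrable (fun x : ℝ => (-2:ℂ) * f (n+2) x) :=
    (integrable_gauss_pow β (n+2)).const_mul _
  have hB : Integrable (fun x : ℝ => ((-2)*β) * f (n+1) x) :=
    (integrable_gauss_pow β (n+1)).const_mul _
  have hC : Integrable (fun x : ℝ => ((n:ℂ)+1) * f n x) :=
    (integrable_gauss_pow β n).const_mul _
  have hAB : Integrable (fun x : ℝ => (-2:ℂ) * f (n+2) x + ((-2)*β) * f (n+1) x) := hA.add hB
  rw [integral_add hAB hC, integral_add hA hB,
    integral_const_mul, integral_const_mul, integral_const_mul] at h0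
  simp only [hf] at h0 ⊢
  linear_combination (-1/2 : ℂ) * h0

lemma gauss_first (β : ℂ) :
    (∫ x : ℝ, Complex.exp (-(x:ℂ)^2) * ((x:ℂ)-β)^1)
      = -β * ∫ x : ℝ, Complex.exp (-(x:ℂ)^2) * ((x:ℂ)-β)^0 := by
  set f : ℕ → ℝ → ℂ := fun m x => Complex.exp (-(x:ℂ)^2) * ((x:ℂ)-β)^m with hf
  have hderiv : ∀ x : ℝ, HasDerivAt (fun y : ℝ => Complex.exp (-(y:ℂ)^2))
      ((-2) * f 1 x + ((-2)*β) * f 0 x) x := by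
    intro x
    have h1 : HasDerivAt (fun z : ℂ => Complex.exp (-z^2))
        (Complex.exp (-(x:ℂ)^2) * -(2*(x:ℂ)^1)) (x:ℂ) :=
      ((hasDerivAt_pow 2 (x:ℂ)).neg).cexp
    convert h1.comp_ofReal using 1
    simp only [hf]
    ring
  have hint : Integrable (fun x : ℝ => (-2:ℂ) * f 1 x + ((-2)*β) * f 0 x) :=
    ((integrable_gauss_pow β 1).const_mul _).add ((integrable_gauss_pow β 0).const_mul _)
  have htop : Tendsto (fun x : ℝ => Complex.exp (-(x:ℂ)^2)) atTop (nhds 0) := by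
    apply (tendsto_gauss_pow_atTop β 0).congr fun x => ?_
    rw [pow_zero, mul_one]
  have hbot : Tendsto (fun x : ℝ => Complex.exp (-(x:ℂ)^2)) atBot (nhds 0) := by
    apply (tendsto_gauss_pow_atBot β 0).congr fun x => ?_
    rw [pow_zero, mul_one]
  have h0 := integral_deriv_zero hderiv hint htop hbot
  have hA : Integrable (fun x : ℝ => (-2:ℂ) * f 1 x) := (integrable_gauss_pow β 1).const_mul _
  have hB : Integrable (fun x : ℝ => ((-2)*β) * f 0 x) := (integrable_gauss_pow β 0).const_mul _
  rw [integral_add hA hB, integral_const_mul, integral_const_mul] at h0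
  simp only [hf] at h0 ⊢
  linear_combination (-1/2 : ℂ) * h0

lemma gauss_zeroth :
    (∫ x : ℝ, Complex.exp (-(x:ℂ)^2)) = (Real.sqrt Real.pi : ℂ) := by
  have h : ∀ x : ℝ, Complex.exp (-(x:ℂ)^2) = ((Real.exp (-x^2) : ℝ) : ℂ) := by
    intro x
    rw [Complex.ofReal_exp]
    push_cast
    ring_nf
  calc (∫ x : ℝ, Complex.exp (-(x:ℂ)^2)) = ∫ x : ℝ, ((Real.exp (-x^2) : ℝ) : ℂ) := by
        simp_rw [h]
    _ = ((∫ x : ℝ, Real.exp (-x^2) : ℝ) : ℂ) := integral_ofReal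
    _ = (Real.sqrt Real.pi : ℂ) := by
        norm_cast
        have h2 : (fun x : ℝ => Real.exp (-x^2)) = fun x : ℝ => Real.exp (-1*x^2) := by
          funext x; norm_num
        rw [h2, integral_gaussian]
        norm_num


/-- For any complex `β` and natural `n`,
`∫_{-∞}^{∞} e^{-x²} (x - β)^n dx = √π (i/2)^n H_n(iβ)`. -/
theorem hermite_integral (β : ℂ) (n : ℕ) :
    ∫ x : ℝ, Complex.exp (-(x : ℂ) ^ 2) * ((x : ℂ) - β) ^ n
      = (Real.sqrt Real.pi : ℂ) * (Complex.I / 2) ^ n *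
        Polynomial.aeval (Complex.I * β) (physHermite n) := by
  induction n using Nat.twoStepInduction with
  | zero =>
    simp only [pow_zero, mul_one, physHermite, map_one]
    rw [gauss_zeroth]
  | one =>
    rw [gauss_first]
    have h0 : (∫ x : ℝ, Complex.exp (-(x:ℂ)^2) * ((x:ℂ)-β)^0) = (Real.sqrt Real.pi : ℂ) := by
      simp only [pow_zero, mul_one]
      exact gauss_zeroth
    rw [h0]
    have ha : aeval (Complex.I*β) (physHermite 1) = 2*(Complex.I*β) := by
      simp [physHermite, map_ofNat]
    rw [ha, pow_one]
    linear_combination (-(Real.sqrt Real.pi : ℂ) * β) * Complex.I_sq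
  | more n ih1 ih2 =>
    rw [gauss_ibp, ih1, ih2, aeval_physHermite_succ_succ, pow_succ, pow_succ]
    linear_combination ((Real.sqrt Real.pi : ℂ) * (Complex.I/2)^n *
      (((n:ℂ)+1)/2 * aeval (Complex.I*β) (physHermite n)
        - Complex.I/2 * β * aeval (Complex.I*β) (physHermite (n+1)))) * Complex.I_sq
end

section
/- The two-particle scaling function defined by the double integral f_2(α) = (−1/(2π)) ∫_{−∞}^{∞} du_1 ∫_{u_1}^{∞} du_2 ∫_0^{∞} dν e^{−u_1²/2} e^{−(u_2+ν)²/2 − αν} (u_1 − (u_2+ν)) equals e^{α²} Erfc(α) for all real α. -/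
open MeasureTheory Real Set Filter

namespace SVW

lemma integrable_gauss (c : ℝ) (hc : 0 < c) : Integrable fun x : ℝ => Real.exp (-x^2/c) := by
  have e : (fun x : ℝ => Real.exp (-x^2/c)) = fun x => Real.exp (-(1/c) * x^2) := by
    funext x; ring_nf
  rw [e]; exact integrable_exp_neg_mul_sq (by positivity)

lemma integrable_abs_gauss (c : ℝ) (hc : 0 < c) :
    Integrable fun x : ℝ => |x| * Real.exp (-x^2/c) := by
  have h := (integrable_mul_exp_neg_mul_sq (show (0:ℝ) < 1/c by positivity)).abs
  refine h.congr (Eventually.of_forall fun x => ?_)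
  simp only [abs_mul, abs_of_nonneg (exp_pos _).le]
  congr 2
  ring

lemma integrable_one_add_abs_gauss (c : ℝ) (hc : 0 < c) :
    Integrable fun x : ℝ => (1 + |x|) * Real.exp (-x^2/c) := by
  have := (integrable_gauss c hc).add (integrable_abs_gauss c hc)
  refine this.congr (Eventually.of_forall fun x => ?_)
  simp only [Pi.add_apply]
  ring

lemma integral_gauss_sq (c : ℝ) (hc : 0 < c) :
    ∫ x : ℝ, Real.exp (-x^2/c) = Real.sqrt (c * π) := by
  have e : (fun x : ℝ => Real.exp (-x^2/c)) = fun x => Real.exp (-(1/c) * x^2) := by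
    funext x; ring_nf
  rw [e, integral_gaussian]
  rw [div_div_eq_mul_div, div_one, mul_comm]

/-- translation for Ioi set integrals -/
lemma integral_Ioi_comp_add_right (f : ℝ → ℝ) (a c : ℝ) :
    ∫ x in Ioi a, f (x + c) = ∫ x in Ioi (a + c), f x := by
  rw [← integral_indicator measurableSet_Ioi, ← integral_indicator measurableSet_Ioi,
    ← integral_add_right_eq_self (fun x => (Ioi (a + c)).indicator f x) c]
  congr 1
  funext x
  by_cases h : x ∈ Ioi a
  · rw [indicator_of_mem h, indicator_of_mem (by simpa using add_lt_add_right h.out c)]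
  · rw [indicator_of_notMem h, indicator_of_notMem (fun hh => h (by simpa using hh))]

noncomputable def G (a : ℝ) : ℝ := ∫ w in Ioi a, Real.exp (-w^2/2)

lemma G_nonneg (a : ℝ) : 0 ≤ G a :=
  setIntegral_nonneg measurableSet_Ioi fun x _ => (exp_pos _).le

lemma G_le (a : ℝ) : G a ≤ Real.sqrt (2 * π) := by
  have h := setIntegral_le_integral (μ := volume) (s := Ioi a)
    (integrable_gauss 2 two_pos) (Eventually.of_forall fun x => (exp_pos _).le)
  calc G a ≤ ∫ x : ℝ, Real.exp (-x^2/2) := h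
    _ = Real.sqrt (2 * π) := by
        have e : (fun x : ℝ => Real.exp (-x^2/2)) = fun x => Real.exp (-(1/2 : ℝ) * x^2) := by
          funext x; ring_nf
        rw [e, integral_gaussian]
        norm_num
        rw [mul_comm]

lemma G_anti : Antitone G := fun a b hab =>
  setIntegral_mono_set (integrable_gauss 2 two_pos).integrableOn
    (Eventually.of_forall fun x => (exp_pos _).le)
    (HasSubset.Subset.eventuallyLE (Ioi_subset_Ioi hab))

lemma G_le_of_nonneg (a : ℝ) (ha : 0 ≤ a) :
    G a ≤ Real.sqrt (4 * π) * Real.exp (-a^2/4) := by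
  have h1 : G a ≤ ∫ w in Ioi a, Real.exp (-a^2/4) * Real.exp (-w^2/4) := by
    refine setIntegral_mono_on (integrable_gauss 2 two_pos).integrableOn
      (((integrable_gauss 4 four_pos).const_mul _).integrableOn) measurableSet_Ioi
      fun w hw => ?_
    rw [← Real.exp_add]
    apply Real.exp_le_exp.2
    have : a ≤ w := le_of_lt hw
    nlinarith [sq_nonneg (w - a), sq_nonneg w, sq_nonneg a]
  calc G a ≤ ∫ w in Ioi a, Real.exp (-a^2/4) * Real.exp (-w^2/4) := h1
    _ = Real.exp (-a^2/4) * ∫ w in Ioi a, Real.exp (-w^2/4) := MeasureTheory.integral_const_mul _ _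
    _ ≤ Real.exp (-a^2/4) * ∫ w : ℝ, Real.exp (-w^2/4) := by
        refine mul_le_mul_of_nonneg_left ?_ (exp_pos _).le
        exact setIntegral_le_integral (integrable_gauss 4 four_pos)
          (Eventually.of_forall fun x => (exp_pos _).le)
    _ = Real.sqrt (4 * π) * Real.exp (-a^2/4) := by
        rw [mul_comm]
        congr 1
        have e : (fun x : ℝ => Real.exp (-x^2/4)) = fun x => Real.exp (-(1/4 : ℝ) * x^2) := by
          funext x; ring_nf
        rw [e, integral_gaussian]
        norm_num
        rw [mul_comm]
        ring

lemma sqrt_two_pi_le : Real.sqrt (2 * π) ≤ 3 := by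
  rw [show (3:ℝ) = Real.sqrt 9 by rw [show (9:ℝ) = 3^2 by norm_num, Real.sqrt_sq]; norm_num]
  exact Real.sqrt_le_sqrt (by nlinarith [pi_le_four])

lemma sqrt_four_pi_le : Real.sqrt (4 * π) ≤ 6 := by
  rw [show (6:ℝ) = Real.sqrt 36 by rw [show (36:ℝ) = 6^2 by norm_num, Real.sqrt_sq]; norm_num]
  exact Real.sqrt_le_sqrt (by nlinarith [pi_le_four])

/-- key product bound for the second Fubini -/
lemma bound_G (u ν : ℝ) (hν : 0 ≤ ν) :
    Real.exp (-u^2/4) * G (u + ν) ≤ 6 * Real.exp (-ν^2/16) := by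
  rcases le_or_gt u (-(ν/2)) with h | h
  · have h1 : Real.exp (-u^2/4) ≤ Real.exp (-ν^2/16) := by
      apply Real.exp_le_exp.2
      nlinarith [sq_nonneg (u + ν/2)]
    calc Real.exp (-u^2/4) * G (u + ν) ≤ Real.exp (-ν^2/16) * 3 := by
          apply mul_le_mul h1 ((G_le _).trans sqrt_two_pi_le) (G_nonneg _) (exp_pos _).le
      _ ≤ 6 * Real.exp (-ν^2/16) := by rw [mul_comm]; nlinarith [exp_pos (-ν^2/16)]
  · have h2 : G (u + ν) ≤ G (ν/2) := G_anti (by linarith)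
    have h3 : G (ν/2) ≤ Real.sqrt (4 * π) * Real.exp (-(ν/2)^2/4) :=
      G_le_of_nonneg _ (by positivity)
    have h4 : Real.exp (-(ν/2)^2/4) = Real.exp (-ν^2/16) := by ring_nf
    calc Real.exp (-u^2/4) * G (u + ν) ≤ 1 * (Real.sqrt (4*π) * Real.exp (-ν^2/16)) := by
          refine mul_le_mul (Real.exp_le_one_iff.2 (by nlinarith [sq_nonneg u])) ?_
            (G_nonneg _) one_pos.le
          rw [← h4]; exact h2.trans h3
      _ ≤ 6 * Real.exp (-ν^2/16) := by
          rw [one_mul]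
          exact mul_le_mul_of_nonneg_right sqrt_four_pi_le (exp_pos _).le

lemma G_eq (a : ℝ) : G a = G 0 - ∫ t in (0:ℝ)..a, Real.exp (-t^2/2) := by
  have h0 : IntegrableOn (fun t : ℝ => Real.exp (-t^2/2)) (Iic 0) volume :=
    (integrable_gauss 2 two_pos).integrableOn
  have ha : IntegrableOn (fun t : ℝ => Real.exp (-t^2/2)) (Iic a) volume :=
    (integrable_gauss 2 two_pos).integrableOn
  have h1 := intervalIntegral.integral_Iic_add_Ioi (μ := volume) (b := a)
    (f := fun t : ℝ => Real.exp (-t^2/2)) ha (integrable_gauss 2 two_pos).integrableOn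
  have h2 := intervalIntegral.integral_Iic_add_Ioi (μ := volume) (b := (0:ℝ))
    (f := fun t : ℝ => Real.exp (-t^2/2)) h0 (integrable_gauss 2 two_pos).integrableOn
  have h3 := intervalIntegral.integral_Iic_sub_Iic (μ := volume)
    (f := fun t : ℝ => Real.exp (-t^2/2)) h0 ha
  simp only [G]
  linarith [h1, h2, h3]

lemma hasDerivAt_G (a : ℝ) : HasDerivAt G (-Real.exp (-a^2/2)) a := by
  have h : HasDerivAt (fun u => ∫ t in (0:ℝ)..u, Real.exp (-t^2/2)) (Real.exp (-a^2/2)) a := by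
    refine intervalIntegral.integral_hasDerivAt_right
      ((integrable_gauss 2 two_pos).intervalIntegrable)
      ?_ ?_
    · exact (Real.continuous_exp.comp
        ((continuous_pow 2).neg.div_const 2)).stronglyMeasurableAtFilter _ _
    · exact Continuous.continuousAt (Real.continuous_exp.comp ((continuous_pow 2).neg.div_const 2))
  have : HasDerivAt (fun u => G 0 - ∫ t in (0:ℝ)..u, Real.exp (-t^2/2)) (-Real.exp (-a^2/2)) a :=
    (h.const_sub _)
  refine this.congr_of_eventuallyEq (Eventually.of_forall fun x => (G_eq x))

lemma continuous_G : Continuous G :=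
  Differentiable.continuous (fun a => (hasDerivAt_G a).differentiableAt)

lemma tendsto_gauss_atTop (c : ℝ) (hc : 0 < c) :
    Tendsto (fun u : ℝ => Real.exp (-u^2/c)) atTop (nhds 0) := by
  apply Real.tendsto_exp_atBot.comp
  have h : Tendsto (fun u : ℝ => u^2) atTop atTop := tendsto_pow_atTop two_ne_zero
  have := h.atTop_mul_const (show (0:ℝ) < 1/c by positivity)
  refine (tendsto_neg_atTop_atBot.comp this).congr fun x => by simp [Function.comp]; ring

lemma tendsto_gauss_atBot (c : ℝ) (hc : 0 < c) :
    Tendsto (fun u : ℝ => Real.exp (-u^2/c)) atBot (nhds 0) := by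
  have h := (tendsto_gauss_atTop c hc).comp tendsto_neg_atBot_atTop
  refine h.congr fun x => by simp [Function.comp, neg_sq]

/-- derivative of the gaussian -/
lemma hasDerivAt_neg_gauss (x : ℝ) :
    HasDerivAt (fun w : ℝ => -Real.exp (-w^2/2)) (x * Real.exp (-x^2/2)) x := by
  have h1 : HasDerivAt (fun w : ℝ => -w^2/2) (-x) x := by
    have := ((hasDerivAt_pow 2 x).div_const 2).fun_neg
    convert this using 1
    · rfl
    · rfl
    · funext w; ring
    · push_cast; ring
  have h2 := (h1.exp).fun_neg
  convert h2 using 1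
  · rfl
  · rfl
  · ring

lemma integrableOn_x_gauss (s : Set ℝ) :
    IntegrableOn (fun x : ℝ => x * Real.exp (-x^2/2)) s := by
  refine ((integrable_abs_gauss 2 two_pos).mono' ?_ ?_).integrableOn
  · exact (continuous_id.mul (Real.continuous_exp.comp
      ((continuous_pow 2).neg.div_const 2))).aestronglyMeasurable
  · refine Eventually.of_forall fun x => ?_
    rw [Real.norm_eq_abs, abs_mul, abs_of_nonneg (exp_pos _).le]

/-- ∫_{Ioi a} w e^{-w²/2} dw = e^{-a²/2} -/
lemma int_w_gauss (a : ℝ) :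
    ∫ w in Ioi a, w * Real.exp (-w^2/2) = Real.exp (-a^2/2) := by
  have hlim : Tendsto (fun w : ℝ => -Real.exp (-w^2/2)) atTop (nhds 0) := by
    simpa using (tendsto_gauss_atTop 2 two_pos).neg
  have h := integral_Ioi_of_hasDerivAt_of_tendsto' (a := a)
    (fun x _ => hasDerivAt_neg_gauss x) (integrableOn_x_gauss (Ioi a)) hlim
  simpa using h

lemma int1 (a c : ℝ) :
    ∫ w in Ioi a, Real.exp (-w^2/2) * (c - w) = c * G a - Real.exp (-a^2/2) := by
  have h1 : ∀ w : ℝ, Real.exp (-w^2/2) * (c - w)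
      = c * Real.exp (-w^2/2) - w * Real.exp (-w^2/2) := fun w => by ring
  simp only [h1]
  rw [integral_sub (((integrable_gauss 2 two_pos).const_mul c).integrableOn)
    (integrableOn_x_gauss _), MeasureTheory.integral_const_mul, int_w_gauss]
  rfl

lemma int2 (c : ℝ) :
    ∫ u : ℝ, Real.exp (-u^2/2) * Real.exp (-(u+c)^2/2) = Real.sqrt π * Real.exp (-c^2/4) := by
  have h1 : ∀ u : ℝ, Real.exp (-u^2/2) * Real.exp (-(u+c)^2/2)
      = Real.exp (-c^2/4) * Real.exp (-(u + c/2)^2) := fun u => by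
    rw [← Real.exp_add, ← Real.exp_add]; congr 1; ring
  simp only [h1]
  rw [MeasureTheory.integral_const_mul]
  have h2 : ∫ u : ℝ, Real.exp (-(u + c/2)^2) = ∫ u : ℝ, Real.exp (-u^2) :=
    integral_add_right_eq_self (fun u => Real.exp (-u^2)) (c/2)
  have h3 : ∫ u : ℝ, Real.exp (-u^2) = Real.sqrt π := by
    have := integral_gaussian 1
    simpa using this
  rw [h2, h3]; ring

lemma integrable_gauss_prod (ν : ℝ) :
    Integrable (fun u : ℝ => Real.exp (-u^2/2) * Real.exp (-(u+ν)^2/2)) := by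
  refine (integrable_gauss 2 two_pos).mono' ?_ ?_
  · exact ((Real.continuous_exp.comp ((continuous_pow 2).neg.div_const 2)).mul
      (Real.continuous_exp.comp (((continuous_id.add continuous_const).pow 2).neg.div_const
        2))).aestronglyMeasurable
  · refine Eventually.of_forall fun u => ?_
    rw [Real.norm_eq_abs, abs_mul, abs_of_nonneg (exp_pos _).le, abs_of_nonneg (exp_pos _).le]
    nlinarith [exp_pos (-u^2/2), Real.exp_le_one_iff.2
      (show -(u+ν)^2/2 ≤ 0 by nlinarith [sq_nonneg (u+ν)]), exp_pos (-(u+ν)^2/2)]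

lemma integrable_Phi' (ν : ℝ) : Integrable (fun u : ℝ =>
    u * Real.exp (-u^2/2) * G (u + ν) + Real.exp (-u^2/2) * Real.exp (-(u+ν)^2/2)) := by
  have hA : Integrable (fun u : ℝ => u * Real.exp (-u^2/2) * G (u + ν)) := by
    refine ((integrable_abs_gauss 2 two_pos).const_mul (Real.sqrt (2*π))).mono' ?_ ?_
    · exact ((continuous_id.mul (Real.continuous_exp.comp
        ((continuous_pow 2).neg.div_const 2))).mul
        (continuous_G.comp (continuous_id.add continuous_const))).aestronglyMeasurable
    · refine Eventually.of_forall fun u => ?_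
      rw [Real.norm_eq_abs, abs_mul, abs_mul, abs_of_nonneg (exp_pos _).le,
        abs_of_nonneg (G_nonneg _)]
      have := G_le (u + ν)
      have := G_nonneg (u + ν)
      have h0 : (0:ℝ) ≤ |u| * Real.exp (-u^2/2) := by positivity
      nlinarith [abs_nonneg u, exp_pos (-u^2/2)]
  exact hA.add (integrable_gauss_prod ν)

lemma tendsto_Phi_top (ν : ℝ) :
    Tendsto (fun u : ℝ => -Real.exp (-u^2/2) * G (u + ν)) atTop (nhds 0) := by
  refine squeeze_zero_norm (a := fun u : ℝ => Real.sqrt (2*π) * Real.exp (-u^2/2))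
    (fun u => ?_) ?_
  · rw [norm_mul, norm_neg, Real.norm_eq_abs, Real.norm_eq_abs,
      abs_of_nonneg (exp_pos _).le, abs_of_nonneg (G_nonneg _)]
    nlinarith [G_le (u + ν), G_nonneg (u + ν), exp_pos (-u^2/2)]
  · simpa using (tendsto_gauss_atTop 2 two_pos).const_mul (Real.sqrt (2*π))

lemma tendsto_Phi_bot (ν : ℝ) :
    Tendsto (fun u : ℝ => -Real.exp (-u^2/2) * G (u + ν)) atBot (nhds 0) := by
  refine squeeze_zero_norm (a := fun u : ℝ => Real.sqrt (2*π) * Real.exp (-u^2/2))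
    (fun u => ?_) ?_
  · rw [norm_mul, norm_neg, Real.norm_eq_abs, Real.norm_eq_abs,
      abs_of_nonneg (exp_pos _).le, abs_of_nonneg (G_nonneg _)]
    nlinarith [G_le (u + ν), G_nonneg (u + ν), exp_pos (-u^2/2)]
  · simpa using (tendsto_gauss_atBot 2 two_pos).const_mul (Real.sqrt (2*π))

lemma hasDerivAt_Phi (ν u : ℝ) :
    HasDerivAt (fun u : ℝ => -Real.exp (-u^2/2) * G (u + ν))
      (u * Real.exp (-u^2/2) * G (u + ν)
        + Real.exp (-u^2/2) * Real.exp (-(u+ν)^2/2)) u := by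
  have h1 := hasDerivAt_neg_gauss u
  have h2 : HasDerivAt (fun w : ℝ => G (w + ν)) (-Real.exp (-(u+ν)^2/2)) u := by
    have := (hasDerivAt_G (u + ν)).comp u ((hasDerivAt_id u).add_const ν)
    simp at this; exact this
  have h3 := h1.fun_mul h2
  convert h3 using 1
  · rfl
  · rfl
  · ring

lemma int_Phi' (ν : ℝ) :
    ∫ u : ℝ, (u * Real.exp (-u^2/2) * G (u + ν)
      + Real.exp (-u^2/2) * Real.exp (-(u+ν)^2/2)) = 0 := by
  have hIic := integral_Iic_of_hasDerivAt_of_tendsto' (a := (0:ℝ))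
    (fun x _ => hasDerivAt_Phi ν x) (integrable_Phi' ν).integrableOn (tendsto_Phi_bot ν)
  have hIoi := integral_Ioi_of_hasDerivAt_of_tendsto' (a := (0:ℝ))
    (fun x _ => hasDerivAt_Phi ν x) (integrable_Phi' ν).integrableOn (tendsto_Phi_top ν)
  have hsplit := intervalIntegral.integral_Iic_add_Ioi (b := (0:ℝ))
    (integrable_Phi' ν).integrableOn (integrable_Phi' ν).integrableOn
  rw [← hsplit, hIic, hIoi]
  ring

lemma step3 (ν : ℝ) :
    ∫ u : ℝ, Real.exp (-u^2/2) * (u * G (u + ν) - Real.exp (-(u+ν)^2/2))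
      = -2 * Real.sqrt π * Real.exp (-ν^2/4) := by
  have key : (fun u : ℝ => Real.exp (-u^2/2) * (u * G (u + ν) - Real.exp (-(u+ν)^2/2)))
      = fun u => (u * Real.exp (-u^2/2) * G (u + ν)
          + Real.exp (-u^2/2) * Real.exp (-(u+ν)^2/2))
          - 2 * (Real.exp (-u^2/2) * Real.exp (-(u+ν)^2/2)) := by
    funext u; ring
  rw [key, integral_sub (integrable_Phi' ν) ((integrable_gauss_prod ν).const_mul 2),
    int_Phi', MeasureTheory.integral_const_mul, int2]
  ring

lemma inner_u2 (α u₁ ν : ℝ) :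
    ∫ u₂ in Ioi u₁, Real.exp (-(u₂+ν)^2/2 - α*ν) * (u₁ - (u₂+ν))
      = Real.exp (-(α*ν)) * (u₁ * G (u₁+ν) - Real.exp (-(u₁+ν)^2/2)) := by
  have h1 : ∀ u₂ : ℝ, Real.exp (-(u₂+ν)^2/2 - α*ν) * (u₁ - (u₂+ν))
      = Real.exp (-(α*ν)) * (Real.exp (-(u₂+ν)^2/2) * (u₁ - (u₂+ν))) := fun u₂ => by
    rw [show -(u₂+ν)^2/2 - α*ν = -(u₂+ν)^2/2 + -(α*ν) by ring, Real.exp_add]; ring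
  simp only [h1]
  rw [MeasureTheory.integral_const_mul]
  congr 1
  have h2 : ∫ u₂ in Ioi u₁, Real.exp (-(u₂+ν)^2/2) * (u₁ - (u₂+ν))
      = ∫ w in Ioi (u₁+ν), Real.exp (-w^2/2) * (u₁ - w) :=
    integral_Ioi_comp_add_right (fun w => Real.exp (-w^2/2) * (u₁ - w)) u₁ ν
  rw [h2, int1]

lemma ptbound1 (α u₁ u₂ ν : ℝ) (h2 : u₁ < u₂) (hν : 0 < ν) :
    ‖Real.exp (-(u₂+ν)^2/2 - α*ν) * (u₁ - (u₂+ν))‖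
      ≤ (Real.exp (2*u₁^2 + 2*α^2) * (1 + |u₁|) * ((1 + |u₂|) * Real.exp (-u₂^2/8)))
        * ((1 + |ν|) * Real.exp (-ν^2/8)) := by
  rw [Real.norm_eq_abs, abs_mul, abs_of_nonneg (exp_pos _).le]
  have e1 : Real.exp (-(u₂+ν)^2/2 - α*ν)
      ≤ Real.exp (2*u₁^2 + 2*α^2) * (Real.exp (-u₂^2/8) * Real.exp (-ν^2/8)) := by
    rw [← Real.exp_add, ← Real.exp_add]
    apply Real.exp_le_exp.2
    rcases le_or_gt 0 u₂ with hu | hu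
    · nlinarith [sq_nonneg (ν/2 + 2*α), mul_nonneg hu hν.le, sq_nonneg u₁, sq_nonneg α,
        sq_nonneg u₂, sq_nonneg ν]
    · have hsq : u₂^2 ≤ u₁^2 := by nlinarith
      nlinarith [sq_nonneg (ν/2 + 2*α), sq_nonneg (ν + 2*u₂), hsq, sq_nonneg u₁]
  have e2 : |u₁ - (u₂+ν)| ≤ (1 + |u₁|) * ((1 + |u₂|) * (1 + |ν|)) := by
    have t1 : |u₁ - (u₂+ν)| ≤ |u₁| + (|u₂| + |ν|) :=
      (abs_sub _ _).trans (by gcongr; exact abs_add_le _ _)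
    refine t1.trans ?_
    nlinarith [abs_nonneg u₁, abs_nonneg u₂, abs_nonneg ν,
      mul_nonneg (abs_nonneg u₁) (abs_nonneg u₂), mul_nonneg (abs_nonneg u₂) (abs_nonneg ν),
      mul_nonneg (abs_nonneg u₁) (abs_nonneg ν),
      mul_nonneg (mul_nonneg (abs_nonneg u₁) (abs_nonneg u₂)) (abs_nonneg ν)]
  calc Real.exp (-(u₂+ν)^2/2 - α*ν) * |u₁ - (u₂+ν)|
      ≤ (Real.exp (2*u₁^2 + 2*α^2) * (Real.exp (-u₂^2/8) * Real.exp (-ν^2/8)))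
        * ((1 + |u₁|) * ((1 + |u₂|) * (1 + |ν|))) := by
        apply mul_le_mul e1 e2 (abs_nonneg _) (by positivity)
    _ = (Real.exp (2*u₁^2 + 2*α^2) * (1 + |u₁|) * ((1 + |u₂|) * Real.exp (-u₂^2/8)))
        * ((1 + |ν|) * Real.exp (-ν^2/8)) := by ring

lemma integrable1 (α u₁ : ℝ) :
    Integrable (Function.uncurry fun u₂ ν : ℝ =>
        Real.exp (-(u₂+ν)^2/2 - α*ν) * (u₁ - (u₂+ν)))
      ((volume.restrict (Ioi u₁)).prod (volume.restrict (Ioi (0:ℝ)))) := by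
  rw [Measure.prod_restrict]
  have hbint : Integrable (fun p : ℝ × ℝ =>
      (Real.exp (2*u₁^2 + 2*α^2) * (1 + |u₁|) * ((1 + |p.1|) * Real.exp (-p.1^2/8)))
        * ((1 + |p.2|) * Real.exp (-p.2^2/8)))
      ((volume.prod volume).restrict (Ioi u₁ ×ˢ Ioi (0:ℝ))) :=
    (((integrable_one_add_abs_gauss 8 (by norm_num)).const_mul
      (Real.exp (2*u₁^2 + 2*α^2) * (1 + |u₁|))).mul_prod
      (integrable_one_add_abs_gauss 8 (by norm_num))).restrict
  refine Integrable.mono' hbint ?_ ?_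
  · refine Continuous.aestronglyMeasurable ?_
    have hc : Continuous fun p : ℝ × ℝ => p.1 + p.2 := continuous_fst.add continuous_snd
    exact (Real.continuous_exp.comp (((hc.pow 2).neg.div_const 2).sub
      (continuous_const.mul continuous_snd))).mul (continuous_const.sub hc)
  · rw [ae_restrict_iff' (measurableSet_Ioi.prod measurableSet_Ioi)]
    refine Eventually.of_forall fun p hp => ?_
    exact ptbound1 α u₁ p.1 p.2 hp.1 hp.2

lemma ptbound2 (α u ν : ℝ) (hν : 0 ≤ ν) :
    Real.exp (-u^2/2) * Real.exp (-(α*ν)) * (|u| * G (u+ν) + Real.exp (-(u+ν)^2/2))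
      ≤ ((1+|u|) * Real.exp (-u^2/4)) * (7 * Real.exp (8*α^2) * Real.exp (-ν^2/32)) := by
  have hG := bound_G u ν hν
  have B2 : Real.exp (-u^2/2) * Real.exp (-(u+ν)^2/2)
      ≤ Real.exp (-u^2/4) * Real.exp (-ν^2/16) := by
    rw [← Real.exp_add, ← Real.exp_add]
    apply Real.exp_le_exp.2
    nlinarith [sq_nonneg (3*u + 2*ν)]
  have B1 : Real.exp (-u^2/2) * G (u+ν) ≤ Real.exp (-u^2/4) * (6 * Real.exp (-ν^2/16)) := by
    have hsplit : Real.exp (-u^2/2) = Real.exp (-u^2/4) * Real.exp (-u^2/4) := by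
      rw [← Real.exp_add]; congr 1; ring
    rw [hsplit, mul_assoc]
    exact mul_le_mul_of_nonneg_left hG (exp_pos _).le
  have B3 : Real.exp (-(α*ν)) ≤ Real.exp (8*α^2) * Real.exp (ν^2/32) := by
    rw [← Real.exp_add]
    apply Real.exp_le_exp.2
    nlinarith [sq_nonneg (ν + 16*α)]
  calc Real.exp (-u^2/2) * Real.exp (-(α*ν)) * (|u| * G (u+ν) + Real.exp (-(u+ν)^2/2))
      = Real.exp (-(α*ν)) * (|u| * (Real.exp (-u^2/2) * G (u+ν))
          + Real.exp (-u^2/2) * Real.exp (-(u+ν)^2/2)) := by ring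
    _ ≤ Real.exp (-(α*ν)) * (|u| * (Real.exp (-u^2/4) * (6 * Real.exp (-ν^2/16)))
          + Real.exp (-u^2/4) * Real.exp (-ν^2/16)) := by
        apply mul_le_mul_of_nonneg_left ?_ (exp_pos _).le
        gcongr
    _ = Real.exp (-(α*ν)) * ((6*|u| + 1) * (Real.exp (-u^2/4) * Real.exp (-ν^2/16))) := by ring
    _ ≤ (Real.exp (8*α^2) * Real.exp (ν^2/32))
          * ((7*(1+|u|)) * (Real.exp (-u^2/4) * Real.exp (-ν^2/16))) := by
        apply mul_le_mul B3 ?_ (by positivity) (by positivity)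
        apply mul_le_mul_of_nonneg_right ?_ (by positivity)
        nlinarith [abs_nonneg u]
    _ = ((1+|u|) * Real.exp (-u^2/4))
          * (7 * Real.exp (8*α^2) * (Real.exp (ν^2/32) * Real.exp (-ν^2/16))) := by ring
    _ = ((1+|u|) * Real.exp (-u^2/4)) * (7 * Real.exp (8*α^2) * Real.exp (-ν^2/32)) := by
        rw [← Real.exp_add, show ν^2/32 + -ν^2/16 = -ν^2/32 by ring]

lemma norm_F_le (α u ν : ℝ) :
    ‖Real.exp (-u^2/2) * (Real.exp (-(α*ν)) * (u * G (u+ν) - Real.exp (-(u+ν)^2/2)))‖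
      ≤ Real.exp (-u^2/2) * Real.exp (-(α*ν)) * (|u| * G (u+ν) + Real.exp (-(u+ν)^2/2)) := by
  rw [Real.norm_eq_abs, abs_mul, abs_mul, abs_of_nonneg (exp_pos _).le,
    abs_of_nonneg (exp_pos _).le, ← mul_assoc]
  refine mul_le_mul_of_nonneg_left ?_ (by positivity)
  refine (abs_sub _ _).trans ?_
  rw [abs_mul, abs_of_nonneg (G_nonneg _), abs_of_nonneg (exp_pos _).le]

lemma integrable2 (α : ℝ) :
    Integrable (Function.uncurry fun u ν : ℝ =>
        Real.exp (-u^2/2) * (Real.exp (-(α*ν)) * (u * G (u+ν) - Real.exp (-(u+ν)^2/2))))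
      (volume.prod (volume.restrict (Ioi (0:ℝ)))) := by
  have hbint : Integrable (fun p : ℝ × ℝ =>
      ((1+|p.1|) * Real.exp (-p.1^2/4)) * (7 * Real.exp (8*α^2) * Real.exp (-p.2^2/32)))
      (volume.prod (volume.restrict (Ioi (0:ℝ)))) := by
    have := (integrable_one_add_abs_gauss 4 (by norm_num)).mul_prod
      (((integrable_gauss 32 (by norm_num)).const_mul (7 * Real.exp (8*α^2))).restrict
        (s := Ioi (0:ℝ)))
    refine this.congr (Eventually.of_forall fun p => by ring)
  refine Integrable.mono' hbint ?_ ?_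
  · refine Continuous.aestronglyMeasurable ?_
    have hc : Continuous fun p : ℝ × ℝ => p.1 + p.2 := continuous_fst.add continuous_snd
    refine (Real.continuous_exp.comp ((continuous_fst.pow 2).neg.div_const 2)).mul
      ((Real.continuous_exp.comp (continuous_const.mul continuous_snd).neg).mul
        ((continuous_fst.mul (continuous_G.comp hc)).sub
          (Real.continuous_exp.comp ((hc.pow 2).neg.div_const 2))))
  · have hres : volume.prod (volume.restrict (Ioi (0:ℝ)))
        = (volume.prod volume).restrict ((univ : Set ℝ) ×ˢ Ioi (0:ℝ)) := by
      rw [← Measure.prod_restrict]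
      congr 1
      exact Measure.restrict_univ.symm
    rw [hres, ae_restrict_iff' (MeasurableSet.univ.prod measurableSet_Ioi)]
    refine Eventually.of_forall fun p hp => ?_
    exact (norm_F_le α p.1 p.2).trans (ptbound2 α p.1 p.2 hp.2.le)

lemma step1 (α u₁ : ℝ) :
    (∫ u₂ in Ioi u₁, ∫ ν in Ioi (0:ℝ),
      Real.exp (-u₁^2/2) * (Real.exp (-(u₂+ν)^2/2 - α*ν) * (u₁ - (u₂+ν))))
    = ∫ ν in Ioi (0:ℝ),
        Real.exp (-u₁^2/2) * (Real.exp (-(α*ν)) * (u₁ * G (u₁+ν) - Real.exp (-(u₁+ν)^2/2))) := by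
  have e1 : ∀ u₂ : ℝ, (∫ ν in Ioi (0:ℝ),
      Real.exp (-u₁^2/2) * (Real.exp (-(u₂+ν)^2/2 - α*ν) * (u₁ - (u₂+ν))))
      = Real.exp (-u₁^2/2) * ∫ ν in Ioi (0:ℝ),
          Real.exp (-(u₂+ν)^2/2 - α*ν) * (u₁ - (u₂+ν)) :=
    fun u₂ => MeasureTheory.integral_const_mul _ _
  simp only [e1]
  rw [MeasureTheory.integral_const_mul, MeasureTheory.integral_const_mul]
  congr 1
  rw [MeasureTheory.integral_integral_swap (integrable1 α u₁)]
  exact setIntegral_congr_fun measurableSet_Ioi fun ν _ => inner_u2 α u₁ ν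

lemma step2 (α : ℝ) :
    (∫ u₁ : ℝ, ∫ u₂ in Ioi u₁, ∫ ν in Ioi (0:ℝ),
      Real.exp (-u₁^2/2) * (Real.exp (-(u₂+ν)^2/2 - α*ν) * (u₁ - (u₂+ν))))
    = ∫ ν in Ioi (0:ℝ), Real.exp (-(α*ν)) * (-2*Real.sqrt π*Real.exp (-ν^2/4)) := by
  rw [integral_congr_ae (Eventually.of_forall (step1 α))]
  rw [MeasureTheory.integral_integral_swap (integrable2 α)]
  refine setIntegral_congr_fun measurableSet_Ioi fun ν _ => ?_
  have e2 : (fun u : ℝ => Real.exp (-u^2/2)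
      * (Real.exp (-(α*ν)) * (u * G (u+ν) - Real.exp (-(u+ν)^2/2))))
      = fun u => Real.exp (-(α*ν))
          * (Real.exp (-u^2/2) * (u * G (u+ν) - Real.exp (-(u+ν)^2/2))) := by
    funext u; ring
  rw [e2, MeasureTheory.integral_const_mul, step3 ν]

end SVW

open SVW

/-- The two-particle SVW scaling integral equals `e^{α²} Erfc(α)`:
`(-1/(2π)) ∫_{-∞}^∞ du₁ ∫_{u₁}^∞ du₂ ∫_0^∞ dν
   e^{-u₁²/2} e^{-(u₂+ν)²/2 - αν} (u₁ - (u₂+ν)) = e^{α²} Erfc(α)`. -/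
theorem f₂_integral_formula (α : ℝ) :
    (-1 / (2 * Real.pi)) *
      ∫ u₁ : ℝ, ∫ u₂ in Set.Ioi u₁, ∫ ν in Set.Ioi (0 : ℝ),
        Real.exp (-u₁ ^ 2 / 2) *
          (Real.exp (-(u₂ + ν) ^ 2 / 2 - α * ν) * (u₁ - (u₂ + ν)))
      = Real.exp (α ^ 2) *
        (2 / Real.sqrt Real.pi * ∫ x in Set.Ioi α, Real.exp (-x ^ 2)) := by
  rw [step2 α]
  have e3 : ∀ ν ∈ Ioi (0:ℝ), Real.exp (-(α*ν)) * (-2*Real.sqrt π*Real.exp (-ν^2/4))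
      = (-2*Real.sqrt π*Real.exp (α^2)) * Real.exp (-((1/2)*ν+α)^2) := by
    intro ν _
    have h : Real.exp (-(α*ν)) * Real.exp (-ν^2/4)
        = Real.exp (α^2) * Real.exp (-((1/2)*ν+α)^2) := by
      rw [← Real.exp_add, ← Real.exp_add]; congr 1; ring
    calc Real.exp (-(α*ν)) * (-2*Real.sqrt π*Real.exp (-ν^2/4))
        = (-2*Real.sqrt π) * (Real.exp (-(α*ν)) * Real.exp (-ν^2/4)) := by ring
      _ = (-2*Real.sqrt π) * (Real.exp (α^2) * Real.exp (-((1/2)*ν+α)^2)) := by rw [h]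
      _ = (-2*Real.sqrt π*Real.exp (α^2)) * Real.exp (-((1/2)*ν+α)^2) := by ring
  rw [setIntegral_congr_fun measurableSet_Ioi e3, MeasureTheory.integral_const_mul]
  have e4 := integral_comp_mul_left_Ioi (fun x => Real.exp (-(x+α)^2)) 0
    (show (0:ℝ) < 1/2 by norm_num)
  simp only [smul_eq_mul] at e4
  rw [e4]
  have e5 : ∫ x in Ioi ((1/2)*(0:ℝ)), Real.exp (-(x+α)^2) = ∫ x in Ioi α, Real.exp (-x^2) := by
    rw [show (1/2)*(0:ℝ) = 0 by norm_num]
    have := integral_Ioi_comp_add_right (fun x => Real.exp (-x^2)) 0 α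
    simpa using this
  rw [e5]
  have h2 : Real.sqrt π * Real.sqrt π = π := Real.mul_self_sqrt pi_pos.le
  have hs : Real.sqrt π ≠ 0 := ne_of_gt (Real.sqrt_pos.2 pi_pos)
  have key : (2:ℝ) * Real.sqrt π / π = 2 / Real.sqrt π := by
    field_simp
    linarith [h2]
  calc (-1/(2*π)) * (-2*Real.sqrt π*Real.exp (α^2)
        * ((1/2)⁻¹ * ∫ x in Ioi α, Real.exp (-x^2)))
      = (2*Real.sqrt π/π) * (Real.exp (α^2) * ∫ x in Ioi α, Real.exp (-x^2)) := by ring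
    _ = (2/Real.sqrt π) * (Real.exp (α^2) * ∫ x in Ioi α, Real.exp (-x^2)) := by rw [key]
    _ = Real.exp (α^2) * (2/Real.sqrt π * ∫ x in Ioi α, Real.exp (-x^2)) := by ring
end

section
/- Define g_{i,j}(x;κ) = (1/2πi) ∮_{C_0} (κ + κξ − 1)^{i−1} (1+ξ)^x / ξ^j dξ (contour around 0). For the equidistant initial configuration x_m^0 − x_i^0 = a(m−i) with a a positive integer, det[g_{i,j}(a(m−i); κ)]_{1≤i,j≤m} = (a + κ − aκ)^{m(m−1)/2}. -/
open Polynomial Finset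

/-- `g_{i,j}(x;κ)` is the coefficient of `ξ^{j-1}` in `(κ + κξ - 1)^{i-1} (1+ξ)^x`.
For the equidistant initial configuration `x_m^0 - x_i^0 = a(m-i)` (with `a ≥ 1`),
`det[g_{i,j}(a(m-i);κ)] = (a + κ - aκ)^{m(m-1)/2}`.  Indices `i, j : Fin m` are
0-based, so `i-1 ↦ i.val`, `j-1 ↦ j.val`, and `m - i ↦ m - 1 - i.val`. -/
theorem det_g_equidistant (m a : ℕ) (ha : 1 ≤ a) (κ : ℂ) :
    Matrix.det (Matrix.of fun i j : Fin m =>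
        ((Polynomial.C κ * (1 + Polynomial.X) - 1) ^ i.val *
            (1 + Polynomial.X) ^ (a * (m - 1 - i.val))).coeff j.val)
      = ((a : ℂ) + κ - (a : ℂ) * κ) ^ (m * (m - 1) / 2) := by
  classical
  set c : ℂ := (a : ℂ) + κ - (a : ℂ) * κ with hc
  set P : ℕ → ℂ[X] := fun i => (C κ * (1 + X) - 1) ^ i * (1 + X) ^ (a * (m - 1 - i)) with hP
  set M : Matrix (Fin m) (Fin m) ℂ := Matrix.of fun i j : Fin m => (P i.val).coeff j.val with hM
  set L : Matrix (Fin m) (Fin m) ℂ := Matrix.of fun i k : Fin m =>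
      if k ≤ i then ((i.val.choose k.val : ℂ)) * (1 - κ) ^ (i.val - k.val) else 0 with hL
  set s : ℂ[X] := (C κ * (1 + X) - 1) + C (1 - κ) * (1 + X) ^ a with hsdef
  -- s is divisible by X
  have hs0 : s.coeff 0 = 0 := by
    simp [hsdef, coeff_one_add_X_pow, sub_mul, coeff_sub, coeff_C_mul]
    try ring
  obtain ⟨t, ht⟩ : X ∣ s := X_dvd_iff.mpr hs0
  have ht0 : t.coeff 0 = c := by
    have h1 : s.coeff 1 = κ + (1 - κ) * a := by
      simp [hsdef, coeff_one_add_X_pow, sub_mul, coeff_sub, coeff_C_mul, coeff_one]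
      try ring
    have h2 : s.coeff 1 = t.coeff 0 := by rw [ht, coeff_X_mul]
    rw [← h2, h1, hc]; ring
  -- the key polynomial identity
  have key : ∀ i : ℕ, i ≤ m - 1 →
      ∑ k ∈ range (i + 1), C ((i.choose k : ℂ)) * C ((1 - κ) ^ (i - k)) * P k
        = s ^ i * (1 + X) ^ (a * (m - 1 - i)) := by
    intro i hi
    rw [hsdef, add_pow, Finset.sum_mul]
    refine Finset.sum_congr rfl fun k hk => ?_
    have hk' : k ≤ i := Nat.lt_succ_iff.mp (Finset.mem_range.mp hk)
    have harith : a * (i - k) + a * (m - 1 - i) = a * (m - 1 - k) := by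
      rw [← Nat.mul_add]
      congr 1
      omega
    rw [hP]
    simp only [mul_pow, ← pow_mul]
    push_cast
    rw [← harith, pow_add, Polynomial.C_eq_natCast, ← Polynomial.C_pow]
    ring
  -- the product matrix N = L * M
  have hN : ∀ i j : Fin m, (L * M) i j = (s ^ i.val * (1 + X) ^ (a * (m - 1 - i.val))).coeff j.val := by
    intro i j
    have : (L * M) i j = ∑ k ∈ range m,
        (if k ≤ i.val then ((i.val.choose k : ℂ)) * (1 - κ) ^ (i.val - k) * (P k).coeff j.val else 0) := by
      rw [Matrix.mul_apply, ← Fin.sum_univ_eq_sum_range]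
      refine Finset.sum_congr rfl fun k _ => ?_
      simp only [hL, hM, Matrix.of_apply, Fin.le_def]
      split_ifs <;> simp
    rw [this, ← key i.val (by omega)]
    have hsub : range (i.val + 1) ⊆ range m := Finset.range_subset_range.mpr (by omega)
    rw [← Finset.sum_subset hsub (fun x _ hx => by
      rw [if_neg]; intro hle; exact hx (Finset.mem_range.mpr (by omega)))]
    rw [finset_sum_coeff]
    refine Finset.sum_congr rfl fun k hk => ?_
    have hk' : k ≤ i.val := Nat.lt_succ_iff.mp (Finset.mem_range.mp hk)
    rw [if_pos hk']
    conv_rhs => rw [mul_assoc, coeff_C_mul, coeff_C_mul]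
    ring
  -- N is upper triangular with diagonal c^i
  have hNtri : (L * M).BlockTriangular id := by
    intro i j hij
    rw [hN, ht]
    rw [mul_pow, mul_assoc, coeff_X_pow_mul']
    rw [if_neg (by simpa using Nat.not_le.mpr hij)]
  have hNdiag : ∀ i : Fin m, (L * M) i i = c ^ i.val := by
    intro i
    rw [hN, ht, mul_pow, mul_assoc]
    have := coeff_X_pow_mul (t ^ i.val * (1 + X) ^ (a * (m - 1 - i.val))) i.val 0
    rw [zero_add] at this
    rw [this, mul_coeff_zero, ← ht0]
    have hpow : (t ^ i.val).coeff 0 = t.coeff 0 ^ i.val := by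
      simpa [Polynomial.constantCoeff_apply] using map_pow Polynomial.constantCoeff t i.val
    rw [hpow, coeff_one_add_X_pow]
    simp
  -- L is lower triangular with diagonal 1, so det L = 1
  have hLdet : L.det = 1 := by
    rw [Matrix.det_of_lowerTriangular L (fun i j hij => by
      have h' : i < j := hij
      simp only [hL, Matrix.of_apply]
      rw [if_neg (not_le.mpr h')])]
    refine Finset.prod_eq_one fun i _ => ?_
    simp [hL]
  -- conclude
  have hdet : M.det = (L * M).det := by rw [Matrix.det_mul, hLdet, one_mul]
  rw [hdet, Matrix.det_of_upperTriangular hNtri]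
  calc ∏ i : Fin m, (L * M) i i = ∏ i : Fin m, c ^ i.val := by
        exact Finset.prod_congr rfl fun i _ => hNdiag i
    _ = c ^ (∑ i : Fin m, i.val) := by rw [Finset.prod_pow_eq_pow_sum]
    _ = c ^ (m * (m - 1) / 2) := by
        rw [Fin.sum_univ_eq_sum_range (fun i => i), Finset.sum_range_id]
end

section
/- For κ > 1 real and integers x_1^0 < ⋯ < x_m^0, the iterated contour integral ∏_{k=1}^m ∮_{|ξ_k|=r} (dξ_k/2πi) · ξ_k^{x_m^0 − x_k^0} / ((ξ_k − κ^{−1})^{m−k}(ξ_k − κ^{m−1})) · ∏_{1≤i<j≤m}(ξ_j − ξ_i), with r > κ^{m−1}, equals (−1)^{m(m−1)/2} κ^{∑_{k=1}^{m−1}(x_k^0 − x_m^0)}. -/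
open MeasureTheory Finset Complex Set Metric

noncomputable section

/-- The integrand of the iterated contour integral, as a function on `ℂ^J`, with
`t` extra "parameter" linear factors in the numerator of each variable. -/
def cIntegrand (J t : ℕ) (a b : ℂ) (n : Fin J → ℕ) (w : Fin t → ℂ) (z : Fin J → ℂ) : ℂ :=
  (∏ l : Fin J, (z l ^ n l * ∏ s : Fin t, (z l - w s)) /
      ((z l - a) ^ (J - 1 - l.val) * (z l - b))) *
    ∏ i : Fin J, ∏ l ∈ Finset.Ioi i, (z l - z i)

lemma cauchy_simple (r : ℝ) (p : ℂ) (hp : ‖p‖ < r) (f : ℂ → ℂ)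
    (hf : Differentiable ℂ f) :
    (∮ z in C(0, r), f z / (z - p)) = 2 * Real.pi * I * f p := by
  have h := (hf.differentiableOn (s := closedBall (0:ℂ) r)).circleIntegral_sub_inv_smul
    (w := p) (by simpa [Complex.dist_eq] using hp)
  simpa [div_eq_inv_mul, smul_eq_mul] using h

lemma cIntegrand_cont (J t : ℕ) (a b : ℂ) (r : ℝ) (ha : ‖a‖ < r)
    (hb : ‖b‖ < r) (n : Fin J → ℕ) (w : Fin t → ℂ) :
    Continuous fun θ : Fin J → ℝ => cIntegrand J t a b n w (torusMap 0 (fun _ => r) θ) := by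
  have habs : ∀ (θ : Fin J → ℝ) (l : Fin J),
      ‖torusMap 0 (fun _ => r) θ l‖ = r := by
    intro θ l
    have h0 : (0:ℝ) ≤ r := (norm_nonneg a).trans ha.le
    simp [torusMap, Complex.norm_real, Real.norm_eq_abs, _root_.abs_of_nonneg h0, norm_exp_ofReal_mul_I]
  have hc : ∀ l : Fin J, Continuous fun θ : Fin J → ℝ => torusMap 0 (fun _ => r) θ l := by
    intro l
    simp only [torusMap]
    fun_prop
  unfold cIntegrand
  apply Continuous.mul
  · apply continuous_finset_prod
    intro l _
    apply Continuous.div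
    · fun_prop
    · fun_prop
    · intro θ
      have h1 : torusMap 0 (fun _ => r) θ l - a ≠ 0 := by
        rw [sub_ne_zero]
        intro h
        rw [← h] at ha; rw [habs θ l] at ha; exact lt_irrefl _ ha
      have h2 : torusMap 0 (fun _ => r) θ l - b ≠ 0 := by
        rw [sub_ne_zero]
        intro h
        rw [← h] at hb; rw [habs θ l] at hb; exact lt_irrefl _ hb
      exact mul_ne_zero (pow_ne_zero _ h1) h2
  · fun_prop

lemma cIntegrand_integrable (J t : ℕ) (a b : ℂ) (r : ℝ) (ha : ‖a‖ < r)
    (hb : ‖b‖ < r) (n : Fin J → ℕ) (w : Fin t → ℂ) :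
    TorusIntegrable (cIntegrand J t a b n w) 0 (fun _ => r) :=
  (cIntegrand_cont J t a b r ha hb n w).continuousOn.integrableOn_compact isCompact_Icc

lemma zpow_sum_comm {α : Type*} {u : ℂ} (hu : u ≠ 0) (s : Finset α) (c : α → ℤ) :
    u ^ (∑ i ∈ s, c i) = ∏ i ∈ s, u ^ c i := by
  classical
  induction s using Finset.induction_on with
  | empty => simp
  | insert _ _ h ih => rw [Finset.sum_insert h, Finset.prod_insert h, zpow_add₀ hu, ih]

lemma key (j : ℕ) : ∀ (t : ℕ) (a b : ℂ) (r : ℝ), ‖a‖ < r → ‖b‖ < r →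
    ∀ (n : Fin (j+1) → ℕ) (w : Fin t → ℂ),
    torusIntegral (cIntegrand (j+1) t a b n w) 0 (fun _ => r)
      = (2 * Real.pi * I) ^ (j+1) * (-1 : ℂ) ^ ((j+1) * j / 2) *
        (b ^ n (Fin.last j) * ∏ s, (b - w s)) *
        ∏ l : Fin j, (a ^ n l.castSucc * ∏ s, (a - w s)) := by
  induction j with
  | zero =>
      intro t a b r ha hb n w
      rw [torusIntegral_dim1]
      have hfun : (fun z : ℂ => cIntegrand 1 t a b n w fun _ => z)
          = fun z => (z ^ n 0 * ∏ s, (z - w s)) / (z - b) := by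
        funext z
        simp [cIntegrand, show (Finset.Ioi (0 : Fin 1)) = ∅ from rfl]
      rw [show ((0 : Fin 1 → ℂ) 0) = (0:ℂ) from rfl, hfun,
        cauchy_simple r b hb _ (by
          apply Differentiable.mul
          · exact differentiable_pow _
          · exact Differentiable.fun_finsetProd fun s _ => (differentiable_id.sub_const _))]
      simp [Fin.last]
  | succ j ih =>
      intro t a b r ha hb n w
      have hr0 : (0:ℝ) < r := lt_of_le_of_lt (norm_nonneg a) ha
      have hint := cIntegrand_integrable (j+2) t a b r ha hb n w
      rw [torusIntegral_succ hint]
      have e1 : ∀ lv : ℕ, j + 2 - 1 - (lv + 1) = j - lv := fun lv => by omega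
      have e2 : ∀ lv : ℕ, j + 1 - 1 - lv = j - lv := fun lv => by omega
      have e4 : ∀ lv : ℕ, j + 1 - (lv + 1) = j - lv := fun lv => by omega
      have hsplit : ∀ (ξ : ℂ) (y : Fin (j+1) → ℂ),
          cIntegrand (j+2) t a b n w (Fin.cons ξ y)
            = ((ξ ^ n 0 * ∏ s, (ξ - w s)) / ((ξ - a) ^ (j+1) * (ξ - b))) *
              cIntegrand (j+1) (t+1) a b (n ∘ Fin.succ) (Fin.snoc w ξ) y := by
        intro ξ y
        have hsnoc : ∀ v : ℂ, ∏ s : Fin (t+1), (v - (Fin.snoc w ξ : Fin (t+1) → ℂ) s)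
            = (∏ s : Fin t, (v - w s)) * (v - ξ) := by
          intro v; rw [Fin.prod_univ_castSucc]; simp
        have e3 : j + 2 - 1 = j + 1 := rfl
        simp only [cIntegrand, hsnoc, Function.comp_apply, e2]
        rw [Fin.prod_univ_succ (f := fun l : Fin (j+2) =>
              ((Fin.cons ξ y : Fin (j+2) → ℂ) l ^ n l *
                  ∏ s : Fin t, ((Fin.cons ξ y : Fin (j+2) → ℂ) l - w s)) /
                (((Fin.cons ξ y : Fin (j+2) → ℂ) l - a) ^ (j + 2 - 1 - l.val) *
                  ((Fin.cons ξ y : Fin (j+2) → ℂ) l - b))),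
            Fin.prod_univ_succ (f := fun i : Fin (j+2) =>
              ∏ l ∈ Finset.Ioi i,
                ((Fin.cons ξ y : Fin (j+2) → ℂ) l - (Fin.cons ξ y : Fin (j+2) → ℂ) i))]
        simp only [Fin.cons_zero, Fin.cons_succ, Fin.prod_Ioi_zero, Fin.prod_Ioi_succ,
          Fin.val_zero, Fin.val_succ, Nat.sub_zero, e1, e3, e4]
        have h2 : ∏ l : Fin (j+1),
            (y l ^ n (Fin.succ l) * ((∏ s : Fin t, (y l - w s)) * (y l - ξ)) /
              ((y l - a) ^ (j - l.val) * (y l - b)))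
            = (∏ l : Fin (j+1), ((y l ^ n (Fin.succ l) * ∏ s : Fin t, (y l - w s)) /
                ((y l - a) ^ (j - l.val) * (y l - b)))) * ∏ l : Fin (j+1), (y l - ξ) := by
          rw [← Finset.prod_mul_distrib]
          exact Finset.prod_congr rfl fun l _ => by rw [div_mul_eq_mul_div, mul_assoc]
        rw [h2]
        ring
      simp only [show ((0 : Fin (j+2) → ℂ) ∘ Fin.succ) = (0 : Fin (j+1) → ℂ) from rfl,
        show ((fun _ : Fin (j+2) => r) ∘ Fin.succ) = (fun _ : Fin (j+1) => r) from rfl,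
        show ((0 : Fin (j+2) → ℂ) 0) = (0:ℂ) from rfl]
      have hsnoc : ∀ (x v : ℂ), ∏ s : Fin (t+1), (v - (Fin.snoc w x : Fin (t+1) → ℂ) s)
          = (∏ s : Fin t, (v - w s)) * (v - x) := by
        intro x v; rw [Fin.prod_univ_castSucc]; simp
      simp_rw [hsplit, torusIntegral_const_mul, ih (t+1) a b r ha hb, hsnoc,
        Function.comp_apply, Fin.succ_last, Fin.succ_castSucc]
      set CST : ℂ := (2 * (Real.pi:ℂ) * Complex.I) ^ (j + 1) * (-1 : ℂ) ^ ((j + 1) * j / 2) *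
          (-1 : ℂ) ^ (j + 1) * (b ^ n (Fin.last (j+1)) * ∏ s : Fin t, (b - w s)) *
          ((∏ l : Fin j, a ^ n l.succ.castSucc) * (∏ s : Fin t, (a - w s)) ^ j) with hCST
      have hcong : (∮ (x : ℂ) in C(0, r),
          (x ^ n 0 * ∏ s : Fin t, (x - w s)) / ((x - a) ^ (j + 1) * (x - b)) *
            ((2 * (Real.pi:ℂ) * Complex.I) ^ (j + 1) * (-1) ^ ((j + 1) * j / 2) *
                (b ^ n (Fin.last j.succ) * ((∏ s : Fin t, (b - w s)) * (b - x))) *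
              ∏ l : Fin j, a ^ n l.succ.castSucc * ((∏ s : Fin t, (a - w s)) * (a - x))))
          = ∮ (x : ℂ) in C(0, r),
              CST * ((x ^ n 0 * ∏ s : Fin t, (x - w s)) / (x - a)) := by
        apply circleIntegral.integral_congr hr0.le
        intro x hx
        have hxr : ‖x‖ = r := by
          simpa [Complex.dist_eq] using hx
        have hxa : x - a ≠ 0 := by
          rw [sub_ne_zero]; rintro rfl; rw [hxr] at ha; exact lt_irrefl _ ha
        have hxb : x - b ≠ 0 := by
          rw [sub_ne_zero]; rintro rfl; rw [hxr] at hb; exact lt_irrefl _ hb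
        simp only [Finset.prod_mul_distrib, Finset.prod_const, Finset.card_univ,
          Fintype.card_fin, Nat.succ_eq_add_one, hCST]
        rw [show (a - x) ^ j = (-1) ^ j * (x - a) ^ j by rw [← neg_sub x a, neg_pow],
          show (b - x) = -(x - b) from (neg_sub x b).symm]
        field_simp
        ring
      rw [hcong, circleIntegral.integral_const_mul,
        cauchy_simple r a ha _ (by
          apply Differentiable.mul
          · exact differentiable_pow _
          · exact Differentiable.fun_finsetProd fun s _ => (differentiable_id.sub_const _))]
      have hsgn : (j + 1 + 1) * (j + 1) / 2 = (j + 1) * j / 2 + (j + 1) := by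
        rw [show (j+1+1)*(j+1) = (j+1)*j + (j+1)*2 by ring,
          Nat.add_mul_div_right _ _ (by norm_num : (0:ℕ) < 2)]
      rw [Fin.prod_univ_succ (f := fun l : Fin (j+1) => a ^ n l.castSucc * ∏ s : Fin t, (a - w s))]
      simp only [Fin.castSucc_zero, Finset.prod_mul_distrib, Finset.prod_const, Finset.card_univ,
        Fintype.card_fin, hCST]
      rw [hsgn, pow_add]
      ring

/-- For real `κ > 1` and integers `x₁⁰ < ⋯ < x_m⁰`, the iterated contour integral
`∏_{k=1}^m ∮_{|ξ_k|=r} (dξ_k/2πi) ξ_k^{x_m⁰-x_k⁰} /((ξ_k-κ⁻¹)^{m-k}(ξ_k-κ^{m-1}))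
  · ∏_{i<j}(ξ_j-ξ_i)` with `r > κ^{m-1}` equals
`(-1)^{m(m-1)/2} κ^{∑_{k=1}^{m-1}(x_k⁰ - x_m⁰)}`.  The `m` contour integrals are
written as a single integral over the torus, parametrizing `ξ_k = circleMap 0 r (θ k)`,
each contour contributing the factor `(d/dθ) circleMap = i ξ_k` and a `1/(2πi)`. -/
theorem iterated_contour_integral (m : ℕ) (hm : 0 < m) (κ : ℝ) (hκ : 1 < κ)
    (x : Fin m → ℤ) (hx : StrictMono x) (r : ℝ) (hr : κ ^ (m - 1) < r) :
    (1 / (2 * Real.pi * Complex.I)) ^ m *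
      ∫ θ in Set.univ.pi (fun _ : Fin m => Set.Ioc (0 : ℝ) (2 * Real.pi)),
        (∏ k : Fin m, deriv (circleMap 0 r) (θ k)) *
          ((∏ k : Fin m,
              (circleMap 0 r (θ k)) ^ ((x ⟨m - 1, by omega⟩ - x k).toNat) /
                ((circleMap 0 r (θ k) - (κ : ℂ)⁻¹) ^ (m - 1 - k.val) *
                  (circleMap 0 r (θ k) - (κ : ℂ) ^ (m - 1)))) *
            ∏ i : Fin m, ∏ j ∈ Finset.Ioi i, (circleMap 0 r (θ j) - circleMap 0 r (θ i)))
      = (-1 : ℂ) ^ (m * (m - 1) / 2) *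
          (κ : ℂ) ^ (∑ k ∈ Finset.univ.erase (⟨m - 1, by omega⟩ : Fin m),
            (x k - x ⟨m - 1, by omega⟩)) := by
  rcases m with _ | j
  · omega
  have hκ0 : (0:ℝ) < κ := lt_trans one_pos hκ
  have hκ1 : (1:ℝ) ≤ κ ^ j := one_le_pow₀ hκ.le
  have hrj : κ ^ j < r := hr
  have hr0 : (0:ℝ) < r := lt_trans (lt_of_lt_of_le one_pos hκ1) hrj
  set a : ℂ := (κ:ℂ)⁻¹ with hadef
  set b : ℂ := (κ:ℂ) ^ (j + 1 - 1) with hbdef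
  have ha : ‖a‖ < r := by
    rw [hadef, norm_inv, Complex.norm_real, Real.norm_eq_abs, _root_.abs_of_pos hκ0]
    calc κ⁻¹ ≤ 1 := inv_le_one_of_one_le₀ hκ.le
    _ ≤ κ ^ j := hκ1
    _ < r := hrj
  have hb : ‖b‖ < r := by
    rw [hbdef, norm_pow, Complex.norm_real, Real.norm_eq_abs, _root_.abs_of_pos hκ0]
    exact hrj
  set nn : Fin (j+1) → ℕ := fun k => (x (Fin.last j) - x k).toNat with hnn
  have hlast : (⟨j + 1 - 1, by omega⟩ : Fin (j+1)) = Fin.last j := rfl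
  simp only [hlast]
  have hLHS : (∫ θ in Set.univ.pi (fun _ : Fin (j+1) => Set.Ioc (0 : ℝ) (2 * Real.pi)),
        (∏ k : Fin (j+1), deriv (circleMap 0 r) (θ k)) *
          ((∏ k : Fin (j+1),
              (circleMap 0 r (θ k)) ^ ((x (Fin.last j) - x k).toNat) /
                ((circleMap 0 r (θ k) - (κ : ℂ)⁻¹) ^ (j + 1 - 1 - k.val) *
                  (circleMap 0 r (θ k) - (κ : ℂ) ^ (j + 1 - 1)))) *
            ∏ i : Fin (j+1), ∏ l ∈ Finset.Ioi i, (circleMap 0 r (θ l) - circleMap 0 r (θ i))))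
      = torusIntegral (cIntegrand (j+1) 0 a b nn Fin.elim0) 0 (fun _ => r) := by
    rw [show (torusIntegral (cIntegrand (j+1) 0 a b nn Fin.elim0) 0 (fun _ => r))
        = ∫ θ : Fin (j+1) → ℝ in Icc (0 : Fin (j+1) → ℝ) fun _ => 2 * Real.pi,
            (∏ i : Fin (j+1), (r : ℂ) * Complex.exp (θ i * Complex.I) * Complex.I) •
              cIntegrand (j+1) 0 a b nn Fin.elim0 (torusMap 0 (fun _ => r) θ) from rfl]
    rw [volume_pi, setIntegral_congr_set Measure.univ_pi_Ioc_ae_eq_Icc]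
    refine setIntegral_congr_fun measurableSet_Icc fun θ _ => ?_
    simp only [cIntegrand, torusMap, circleMap, deriv_circleMap, smul_eq_mul,
      Finset.univ_eq_empty, Finset.prod_empty, mul_one, circleMap, hnn,
      Pi.zero_apply, zero_add, hadef, hbdef]
  rw [hLHS, key j 0 a b r ha hb nn Fin.elim0]
  simp only [Finset.univ_eq_empty, Finset.prod_empty, mul_one]
  have hnnlast : nn (Fin.last j) = 0 := by simp [hnn]
  rw [hnnlast, pow_zero, mul_one]
  have hprod : (∏ l : Fin j, a ^ nn l.castSucc)
      = (κ:ℂ) ^ (∑ k ∈ Finset.univ.erase (Fin.last j), (x k - x (Fin.last j))) := by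
    rw [Finset.sum_erase _ (by simp), Fin.sum_univ_castSucc, sub_self, add_zero,
      zpow_sum_comm (by exact_mod_cast hκ0.ne' : (κ:ℂ) ≠ 0)]
    refine Finset.prod_congr rfl fun l _ => ?_
    have hlt : x l.castSucc < x (Fin.last j) := hx (Fin.castSucc_lt_last l)
    have hsub : (x l.castSucc - x (Fin.last j))
        = -(((x (Fin.last j) - x l.castSucc).toNat : ℤ)) := by
      rw [Int.toNat_of_nonneg (by omega)]; ring
    rw [hsub, zpow_neg, zpow_natCast, ← inv_pow]
  rw [hprod]
  rw [one_div, inv_pow, ← mul_assoc, ← mul_assoc,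
    inv_mul_cancel₀ (pow_ne_zero _ Complex.two_pi_I_ne_zero), one_mul]
  rfl
end
end
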